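/- Let m ≥ 1, 0 ≤ r ≤ 2m and 0 ≤ k ≤ m with m−k ≡ r (mod 2). If k < m then the cardinality of Θ^{(r)}_k equals 2·binom(m,(m−r+k)/2)·binom(m,(k+r−m)/2), and if k = m (so that r is even) then the cardinality of Θ^{(r)}_m equals binom(m,r/2)², where for a negative integer b one sets binom(a,b) := 0 (the arguments (m−r+k)/2 and (k+r−m)/2 are understood as integers, possibly negative). -/

import Mathlib

/-- `wt₂(u)`: the number of ones among the binary digits `u_0, …, u_{2m-1}` of `u`. -/
def wt2 (m u : ℕ) : ℕ := ((Finset.range (2 * m)).filter fun i => u.testBit i).card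

/-- `O(u) = #{0 ≤ i ≤ m-1 : u_{2i+1} = 1}`. -/
def Ofun (m u : ℕ) : ℕ := ((Finset.range m).filter fun i => u.testBit (2 * i + 1)).card

/-- `E(u) = #{0 ≤ i ≤ m-1 : u_{2i} = 1}`. -/
def Efun (m u : ℕ) : ℕ := ((Finset.range m).filter fun i => u.testBit (2 * i)).card

/-- `Θ_k = {ζ^u : 0 ≤ u ≤ 4^m - 1, |O(u) - E(u)| = m - k}`. -/
def ThetaK {K : Type*} [Monoid K] (m : ℕ) (ζ : K) (k : ℕ) : Set K :=
  {z | ∃ u : ℕ, u ≤ 4 ^ m - 1 ∧ ((Ofun m u : ℤ) - (Efun m u : ℤ)).natAbs = m - k ∧ z = ζ ^ u}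

/-- `Θ^{(r)} = {ζ^u : 0 ≤ u ≤ 4^m - 1, wt₂(u) = 2m - r}`. -/
def ThetaR {K : Type*} [Monoid K] (m : ℕ) (ζ : K) (r : ℕ) : Set K :=
  {z | ∃ u : ℕ, u ≤ 4 ^ m - 1 ∧ wt2 m u = 2 * m - r ∧ z = ζ ^ u}

/-- `binom(a,b)` for an integer `b`, with the convention `binom(a,b) = 0` for `b < 0`. -/
def ibinom (a : ℕ) (b : ℤ) : ℕ := if b < 0 then 0 else a.choose b.toNat

lemma sum_two_pow_lt {n : ℕ} {S : Finset ℕ} (h : S ⊆ Finset.range n) : ∑ i ∈ S, 2^i < 2^n := by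
  induction n generalizing S with
  | zero =>
    have : S = ∅ := Finset.subset_empty.mp (by simpa using h)
    simp [this]
  | succ n ih =>
    by_cases hn : n ∈ S
    · rw [← Finset.insert_erase hn, Finset.sum_insert (Finset.notMem_erase _ _)]
      have h1 : S.erase n ⊆ Finset.range n := by
        intro i hi
        simp only [Finset.mem_erase] at hi
        have := h hi.2
        simp only [Finset.mem_range] at this ⊢
        omega
      have := ih h1
      have : (2:ℕ)^(n+1) = 2 * 2^n := by ring
      omega
    · have h1 : S ⊆ Finset.range n := by
        intro i hi
        have := h hi
        simp only [Finset.mem_range] at this ⊢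
        rcases Nat.lt_succ_iff_lt_or_eq.mp this with h' | h'
        · exact h'
        · exact absurd (h' ▸ hi) hn
      have := ih h1
      have : (2:ℕ)^(n+1) = 2 * 2^n := by ring
      omega

lemma testBit_sum_two_pow {n : ℕ} {S : Finset ℕ} (h : S ⊆ Finset.range n) (j : ℕ) :
    (∑ i ∈ S, 2^i).testBit j = decide (j ∈ S) := by
  induction n generalizing S with
  | zero =>
    have : S = ∅ := Finset.subset_empty.mp (by simpa using h)
    simp [this]
  | succ n ih =>
    by_cases hn : n ∈ S
    · have h1 : S.erase n ⊆ Finset.range n := by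
        intro i hi
        simp only [Finset.mem_erase] at hi
        have := h hi.2
        simp only [Finset.mem_range] at this ⊢
        omega
      rw [← Finset.insert_erase hn, Finset.sum_insert (Finset.notMem_erase _ _)]
      have hb := sum_two_pow_lt h1
      have heq : 2^n + ∑ i ∈ S.erase n, 2^i = 2^n * 1 + ∑ i ∈ S.erase n, 2^i := by ring
      rw [heq, Nat.testBit_two_pow_mul_add 1 hb j]
      split
      · rename_i hj
        rw [ih h1]
        simp only [decide_eq_decide, Finset.mem_erase, Finset.mem_insert]
        constructor
        · intro h2; exact Or.inr h2
        · rintro (rfl | h2)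
          · omega
          · exact h2
      · rename_i hj
        push_neg at hj
        by_cases hjn : j = n
        · subst hjn
          simp [Finset.mem_insert]
        · have : j - n ≠ 0 := by omega
          have h2 : Nat.testBit 1 (j - n) = false := by
            rw [Nat.testBit_lt_two_pow]
            calc 1 < 2^1 := by norm_num
            _ ≤ 2^(j-n) := Nat.pow_le_pow_right (by norm_num) (by omega)
          rw [h2]
          have : j ∉ insert n (S.erase n) := by
            simp only [Finset.mem_insert, Finset.mem_erase]
            rintro (rfl | ⟨-, hjS⟩)
            · exact hjn rfl
            · have := h hjS; simp only [Finset.mem_range] at this; omega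
          simp [this]
    · have h1 : S ⊆ Finset.range n := by
        intro i hi
        have := h hi
        simp only [Finset.mem_range] at this ⊢
        rcases Nat.lt_succ_iff_lt_or_eq.mp this with h' | h'
        · exact h'
        · exact absurd (h' ▸ hi) hn
      exact ih h1


lemma wt2_eq (m u : ℕ) : wt2 m u = Ofun m u + Efun m u := by
  unfold wt2 Ofun Efun
  have hsplit : (Finset.range (2 * m)).filter (fun i => u.testBit i)
      = (((Finset.range m).filter fun i => u.testBit (2 * i + 1)).image (fun i => 2 * i + 1))
        ∪ (((Finset.range m).filter fun i => u.testBit (2 * i)).image (fun i => 2 * i)) := by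
    ext j
    simp only [Finset.mem_union, Finset.mem_image, Finset.mem_filter, Finset.mem_range]
    constructor
    · rintro ⟨hj, hb⟩
      rcases Nat.even_or_odd j with ⟨t, ht⟩ | ⟨t, ht⟩
      · exact Or.inr ⟨t, ⟨by omega, by rw [show 2*t = j by omega]; exact hb⟩, by omega⟩
      · exact Or.inl ⟨t, ⟨by omega, by rw [show 2*t+1 = j by omega]; exact hb⟩, by omega⟩
    · rintro (⟨t, ⟨ht, hb⟩, rfl⟩ | ⟨t, ⟨ht, hb⟩, rfl⟩)
      · exact ⟨by omega, hb⟩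
      · exact ⟨by omega, hb⟩
  rw [hsplit, Finset.card_union_of_disjoint, Finset.card_image_of_injective _ (by intro a b h; dsimp only at h; omega),
    Finset.card_image_of_injective _ (by intro a b h; dsimp only at h; omega), Nat.add_comm]
  · rw [Finset.disjoint_left]
    rintro x hx hy
    simp only [Finset.mem_image] at hx hy
    obtain ⟨a, -, ha⟩ := hx
    obtain ⟨b, -, hb⟩ := hy
    omega

lemma Ofun_le (m u : ℕ) : Ofun m u ≤ m := by
  simpa [Ofun] using Finset.card_filter_le (Finset.range m) _
lemma Efun_le (m u : ℕ) : Efun m u ≤ m := by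
  simpa [Efun] using Finset.card_filter_le (Finset.range m) _
def icode (A B : Finset ℕ) : ℕ :=
  ∑ i ∈ (A.image (fun i => 2 * i + 1) ∪ B.image (fun i => 2 * i)), 2 ^ i

lemma icode_subset {m : ℕ} {A B : Finset ℕ} (hA : A ⊆ Finset.range m) (hB : B ⊆ Finset.range m) :
    (A.image (fun i => 2 * i + 1) ∪ B.image (fun i => 2 * i)) ⊆ Finset.range (2 * m) := by
  intro j hj
  simp only [Finset.mem_union, Finset.mem_image] at hj
  simp only [Finset.mem_range]
  rcases hj with ⟨t, ht, rfl⟩ | ⟨t, ht, rfl⟩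
  · have := hA ht; simp only [Finset.mem_range] at this; omega
  · have := hB ht; simp only [Finset.mem_range] at this; omega

lemma icode_lt {m : ℕ} {A B : Finset ℕ} (hA : A ⊆ Finset.range m) (hB : B ⊆ Finset.range m) :
    icode A B < 2 ^ (2 * m) := sum_two_pow_lt (icode_subset hA hB)

lemma icode_testBit_odd {m : ℕ} {A B : Finset ℕ} (hA : A ⊆ Finset.range m)
    (hB : B ⊆ Finset.range m) (j : ℕ) : (icode A B).testBit (2 * j + 1) = decide (j ∈ A) := by
  rw [icode, testBit_sum_two_pow (icode_subset hA hB)]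
  simp only [decide_eq_decide, Finset.mem_union, Finset.mem_image]
  constructor
  · rintro (⟨t, ht, h⟩ | ⟨t, ht, h⟩)
    · rwa [show t = j by omega] at ht
    · omega
  · intro h; exact Or.inl ⟨j, h, rfl⟩

lemma icode_testBit_even {m : ℕ} {A B : Finset ℕ} (hA : A ⊆ Finset.range m)
    (hB : B ⊆ Finset.range m) (j : ℕ) : (icode A B).testBit (2 * j) = decide (j ∈ B) := by
  rw [icode, testBit_sum_two_pow (icode_subset hA hB)]
  simp only [decide_eq_decide, Finset.mem_union, Finset.mem_image]
  constructor
  · rintro (⟨t, ht, h⟩ | ⟨t, ht, h⟩)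
    · omega
    · rwa [show t = j by omega] at ht
  · intro h; exact Or.inr ⟨j, h, rfl⟩

lemma Ofun_icode {m : ℕ} {A B : Finset ℕ} (hA : A ⊆ Finset.range m) (hB : B ⊆ Finset.range m) :
    Ofun m (icode A B) = A.card := by
  unfold Ofun
  congr 1
  ext i
  simp only [Finset.mem_filter, Finset.mem_range, icode_testBit_odd hA hB, decide_eq_true_eq]
  exact ⟨fun h => h.2, fun h => ⟨by have := hA h; simpa using this, h⟩⟩

lemma Efun_icode {m : ℕ} {A B : Finset ℕ} (hA : A ⊆ Finset.range m) (hB : B ⊆ Finset.range m) :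
    Efun m (icode A B) = B.card := by
  unfold Efun
  congr 1
  ext i
  simp only [Finset.mem_filter, Finset.mem_range, icode_testBit_even hA hB, decide_eq_true_eq]
  exact ⟨fun h => h.2, fun h => ⟨by have := hB h; simpa using this, h⟩⟩

lemma icode_recover {m u : ℕ} (hu : u < 2 ^ (2 * m)) :
    icode ((Finset.range m).filter fun i => u.testBit (2 * i + 1))
      ((Finset.range m).filter fun i => u.testBit (2 * i)) = u := by
  set A := (Finset.range m).filter fun i => u.testBit (2 * i + 1) with hA
  set B := (Finset.range m).filter fun i => u.testBit (2 * i) with hB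
  have hAs : A ⊆ Finset.range m := Finset.filter_subset _ _
  have hBs : B ⊆ Finset.range m := Finset.filter_subset _ _
  apply Nat.eq_of_testBit_eq
  intro j
  rcases Nat.even_or_odd j with ⟨t, ht⟩ | ⟨t, ht⟩
  · rw [show j = 2 * t by omega, icode_testBit_even hAs hBs]
    by_cases htm : t < m
    · simp only [hB, Finset.mem_filter, Finset.mem_range]
      by_cases hbit : u.testBit (2 * t)
      · simp [htm, hbit]
      · simp [htm, hbit]
    · have h1 : t ∉ B := fun hc => htm (by simpa using hBs hc)
      have h2 : u.testBit (2 * t) = false :=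
        Nat.testBit_lt_two_pow (lt_of_lt_of_le hu (Nat.pow_le_pow_right (by norm_num) (by omega)))
      simp [h1, h2]
  · rw [show j = 2 * t + 1 by omega, icode_testBit_odd hAs hBs]
    by_cases htm : t < m
    · simp only [hA, Finset.mem_filter, Finset.mem_range]
      by_cases hbit : u.testBit (2 * t + 1)
      · simp [htm, hbit]
      · simp [htm, hbit]
    · have h1 : t ∉ A := fun hc => htm (by simpa using hAs hc)
      have h2 : u.testBit (2 * t + 1) = false :=
        Nat.testBit_lt_two_pow (lt_of_lt_of_le hu (Nat.pow_le_pow_right (by norm_num) (by omega)))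
      simp [h1, h2]

lemma count_OE (m a b : ℕ) :
    ((Finset.range (2 ^ (2 * m))).filter fun u => Ofun m u = a ∧ Efun m u = b).card
      = m.choose a * m.choose b := by
  have key : ((Finset.range (2 ^ (2 * m))).filter fun u => Ofun m u = a ∧ Efun m u = b).card
      = ((Finset.powersetCard a (Finset.range m)) ×ˢ (Finset.powersetCard b (Finset.range m))).card := by
    apply Finset.card_bij'
      (fun u _ => (((Finset.range m).filter fun i => u.testBit (2 * i + 1)),
        ((Finset.range m).filter fun i => u.testBit (2 * i))))
      (fun p _ => icode p.1 p.2)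
    · intro u hu
      simp only [Finset.mem_filter, Finset.mem_range] at hu
      simp only [Finset.mem_product, Finset.mem_powersetCard]
      exact ⟨⟨Finset.filter_subset _ _, hu.2.1⟩, ⟨Finset.filter_subset _ _, hu.2.2⟩⟩
    · intro p hp
      simp only [Finset.mem_product, Finset.mem_powersetCard] at hp
      simp only [Finset.mem_filter, Finset.mem_range]
      exact ⟨icode_lt hp.1.1 hp.2.1,
        by rw [Ofun_icode hp.1.1 hp.2.1]; exact hp.1.2,
        by rw [Efun_icode hp.1.1 hp.2.1]; exact hp.2.2⟩
    · intro u hu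
      simp only [Finset.mem_filter, Finset.mem_range] at hu
      exact icode_recover hu.1
    · intro p hp
      simp only [Finset.mem_product, Finset.mem_powersetCard] at hp
      have h1 : (Finset.range m).filter (fun i => (icode p.1 p.2).testBit (2 * i + 1)) = p.1 := by
        ext i
        simp only [Finset.mem_filter, Finset.mem_range, icode_testBit_odd hp.1.1 hp.2.1,
          decide_eq_true_eq]
        exact ⟨fun h => h.2, fun h => ⟨by have := hp.1.1 h; simpa using this, h⟩⟩
      have h2 : (Finset.range m).filter (fun i => (icode p.1 p.2).testBit (2 * i)) = p.2 := by
        ext i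
        simp only [Finset.mem_filter, Finset.mem_range, icode_testBit_even hp.1.1 hp.2.1,
          decide_eq_true_eq]
        exact ⟨fun h => h.2, fun h => ⟨by have := hp.2.1 h; simpa using this, h⟩⟩
      exact Prod.ext h1 h2
  rw [key, Finset.card_product, Finset.card_powersetCard, Finset.card_powersetCard,
    Finset.card_range]
def Tset (m r k : ℕ) : Finset ℕ :=
  (Finset.range (2 ^ (2 * m))).filter fun u =>
    wt2 m u = 2 * m - r ∧ ((Ofun m u : ℤ) - (Efun m u : ℤ)).natAbs = m - k

lemma mem_Tset {m r k u : ℕ} : u ∈ Tset m r k ↔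
    u < 2 ^ (2 * m) ∧ wt2 m u = 2 * m - r ∧ ((Ofun m u : ℤ) - (Efun m u : ℤ)).natAbs = m - k := by
  simp [Tset, and_assoc]

lemma Tcard_two (m r k a b : ℕ) (hk : k < m)
    (ha : 2 * a + r + k = 3 * m) (hb : 2 * b + r = m + k) :
    (Tset m r k).card = 2 * (m.choose a * m.choose b) := by
  have hcong : Tset m r k = (Finset.range (2 ^ (2 * m))).filter
      (fun u => (Ofun m u = a ∧ Efun m u = b) ∨ (Ofun m u = b ∧ Efun m u = a)) := by
    unfold Tset
    apply Finset.filter_congr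
    intro u _
    have h1 := Ofun_le m u
    have h2 := Efun_le m u
    rw [wt2_eq]
    constructor
    · rintro ⟨hs, hd⟩; omega
    · rintro (⟨h3, h4⟩ | ⟨h3, h4⟩) <;> omega
  rw [hcong, Finset.filter_or, Finset.card_union_of_disjoint, count_OE, count_OE]
  · ring
  · rw [Finset.disjoint_left]
    intro u hu hv
    simp only [Finset.mem_filter] at hu hv
    omega

lemma Tcard_one (m r a : ℕ) (hr : r ≤ 2 * m) (ha : 2 * a + r = 2 * m) :
    (Tset m r m).card = m.choose a * m.choose a := by
  have hcong : Tset m r m = (Finset.range (2 ^ (2 * m))).filter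
      (fun u => Ofun m u = a ∧ Efun m u = a) := by
    unfold Tset
    apply Finset.filter_congr
    intro u _
    have h1 := Ofun_le m u
    have h2 := Efun_le m u
    rw [wt2_eq]
    constructor
    · rintro ⟨hs, hd⟩; omega
    · rintro ⟨h3, h4⟩; omega
  rw [hcong, count_OE]

lemma Tcard_zero (m r k : ℕ) (hr : r ≤ 2 * m) (hk : k ≤ m)
    (hcase : m > r + k ∨ r > m + k) : (Tset m r k).card = 0 := by
  rw [Finset.card_eq_zero]
  unfold Tset
  rw [Finset.filter_eq_empty_iff]
  intro u _
  have h1 := Ofun_le m u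
  have h2 := Efun_le m u
  rw [wt2_eq]
  rintro ⟨hs, hd⟩
  omega

lemma Ofun_zero (m : ℕ) : Ofun m 0 = 0 := by simp [Ofun]
lemma Efun_zero (m : ℕ) : Efun m 0 = 0 := by simp [Efun]
lemma wt2_zero (m : ℕ) : wt2 m 0 = 0 := by simp [wt2]

lemma Ofun_top (m : ℕ) : Ofun m (2 ^ (2 * m) - 1) = m := by
  unfold Ofun
  rw [Finset.filter_true_of_mem, Finset.card_range]
  intro i hi
  simp only [Finset.mem_range] at hi
  rw [Nat.testBit_two_pow_sub_one]
  simp; omega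

lemma Efun_top (m : ℕ) : Efun m (2 ^ (2 * m) - 1) = m := by
  unfold Efun
  rw [Finset.filter_true_of_mem, Finset.card_range]
  intro i hi
  simp only [Finset.mem_range] at hi
  rw [Nat.testBit_two_pow_sub_one]
  simp; omega

lemma wt2_top (m : ℕ) : wt2 m (2 ^ (2 * m) - 1) = 2 * m := by
  rw [wt2_eq, Ofun_top, Efun_top]; ring


/-- Let `m ≥ 1`, `0 ≤ r ≤ 2m` and `0 ≤ k ≤ m` with `m - k ≡ r (mod 2)`.
If `k < m` then `|Θ^{(r)}_k| = 2·binom(m,(m-r+k)/2)·binom(m,(k+r-m)/2)`, and if `k = m`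
(so `r` is even) then `|Θ^{(r)}_m| = binom(m,r/2)²`. -/
theorem stmt6 (m : ℕ) (hm : 1 ≤ m) (K : Type*) [Field K] [Algebra (ZMod 2) K]
    [IsAlgClosure (ZMod 2) K] (ζ : K) (hζ : IsPrimitiveRoot ζ (2 ^ (2 * m) - 1))
    (r k : ℕ) (hr : r ≤ 2 * m) (hk : k ≤ m) (hpar : (m - k) % 2 = r % 2) :
    (k < m → (ThetaR m ζ r ∩ ThetaK m ζ k).ncard
        = 2 * ibinom m (((m : ℤ) - r + k) / 2) * ibinom m (((k : ℤ) + r - m) / 2)) ∧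
      (k = m → (ThetaR m ζ r ∩ ThetaK m ζ k).ncard = (Nat.choose m (r / 2)) ^ 2) := by
  classical
  have h4 : (4 : ℕ) ^ m = 2 ^ (2 * m) := by
    rw [show (4:ℕ) = 2 ^ 2 by norm_num, ← pow_mul]
  set n := 2 ^ (2 * m) - 1 with hn
  have hNle : 4 ≤ 2 ^ (2 * m) := by
    calc (4:ℕ) = 2 ^ 2 := by norm_num
    _ ≤ 2 ^ (2 * m) := Nat.pow_le_pow_right (by norm_num) (by omega)
  have hn3 : 3 ≤ n := by omega
  have hpow1 : ζ ^ n = 1 := hζ.pow_eq_one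
  -- the intersection is the image of Tset
  have hset : ThetaR m ζ r ∩ ThetaK m ζ k = ↑((Tset m r k).image fun u => ζ ^ u) := by
    ext z
    simp only [Set.mem_inter_iff, ThetaR, ThetaK, Set.mem_setOf_eq, Finset.coe_image,
      Set.mem_image, Finset.mem_coe]
    constructor
    · rintro ⟨⟨u, hu, hwu, rfl⟩, ⟨v, hv, hov, hzv⟩⟩
      rw [h4] at hu hv
      have hzv' : ζ ^ u = ζ ^ v := hzv
      by_cases hu' : u < n
      · by_cases hv' : v < n
        · have huv : u = v := hζ.pow_inj hu' hv' hzv'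
          subst huv
          exact ⟨u, mem_Tset.mpr ⟨by omega, hwu, hov⟩, rfl⟩
        · -- v = n
          have hv2 : v = n := by omega
          have hz1 : ζ ^ u = ζ ^ 0 := by rw [hzv', hv2, hpow1, pow_zero]
          have hu0 : u = 0 := hζ.pow_inj hu' (by omega) hz1
          subst hu0
          have hkm : m - k = 0 := by
            rw [hv2, Ofun_top, Efun_top] at hov; simpa using hov.symm
          refine ⟨0, mem_Tset.mpr ⟨by omega, hwu, ?_⟩, rfl⟩
          rw [Ofun_zero, Efun_zero]; simpa using hkm.symm
      · -- u = n
        have hu2 : u = n := by omega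
        refine ⟨u, mem_Tset.mpr ⟨by omega, hwu, ?_⟩, rfl⟩
        by_cases hv' : v < n
        · have hz1 : ζ ^ v = ζ ^ 0 := by rw [← hzv', hu2, hpow1, pow_zero]
          have hv0 : v = 0 := hζ.pow_inj hv' (by omega) hz1
          subst hv0
          have hkm : m - k = 0 := by
            rw [Ofun_zero, Efun_zero] at hov; simpa using hov.symm
          rw [hu2, Ofun_top, Efun_top]; simpa using hkm.symm
        · have hv2 : v = n := by omega
          rw [hu2, ← hv2]; exact hov
    · rintro ⟨u, hu, rfl⟩
      obtain ⟨h0, h1, h2⟩ := mem_Tset.mp hu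
      exact ⟨⟨u, by omega, h1, rfl⟩, ⟨u, by omega, h2, rfl⟩⟩
  have hinj : Set.InjOn (fun u => ζ ^ u) ↑(Tset m r k) := by
    intro u hu v hv h
    simp only [Finset.mem_coe, mem_Tset] at hu hv
    simp only at h
    by_cases hu' : u < n
    · by_cases hv' : v < n
      · exact hζ.pow_inj hu' hv' h
      · have hv2 : v = n := by omega
        have hz1 : ζ ^ u = ζ ^ 0 := by rw [h, hv2, hpow1, pow_zero]
        have hu0 : u = 0 := hζ.pow_inj hu' (by omega) hz1
        exfalso
        have e1 := hu.2.1
        have e2 := hv.2.1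
        rw [hu0, wt2_zero] at e1
        rw [hv2, wt2_top] at e2
        omega
    · by_cases hv' : v < n
      · have hu2 : u = n := by omega
        have hz1 : ζ ^ v = ζ ^ 0 := by rw [← h, hu2, hpow1, pow_zero]
        have hv0 : v = 0 := hζ.pow_inj hv' (by omega) hz1
        exfalso
        have e1 := hu.2.1
        have e2 := hv.2.1
        rw [hu2, wt2_top] at e1
        rw [hv0, wt2_zero] at e2
        omega
      · omega
  have hcard : (ThetaR m ζ r ∩ ThetaK m ζ k).ncard = (Tset m r k).card := by
    rw [hset, Set.ncard_coe_finset, Finset.card_image_of_injOn hinj]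
  constructor
  · intro hkm
    rw [hcard]
    by_cases hc1 : m ≤ r + k
    · by_cases hc2 : r ≤ m + k
      · obtain ⟨a, ha⟩ : ∃ a, 2 * a + r + k = 3 * m := ⟨(3 * m - r - k) / 2, by omega⟩
        obtain ⟨b, hb⟩ : ∃ b, 2 * b + r = m + k := ⟨(m + k - r) / 2, by omega⟩
        rw [Tcard_two m r k a b hkm ha hb]
        have e1 : ((m : ℤ) - r + k) / 2 = (b : ℤ) := by omega
        have e2 : ((k : ℤ) + r - m) / 2 = ((m - a : ℕ) : ℤ) := by
          omega
        rw [e1, e2]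
        have hbm : ibinom m (b : ℤ) = m.choose b := by
          simp [ibinom]
        have ham : ibinom m ((m - a : ℕ) : ℤ) = m.choose a := by
          simp only [ibinom, if_neg (by omega : ¬ ((m - a : ℕ) : ℤ) < 0)]
          rw [Int.toNat_natCast, Nat.choose_symm (by omega)]
        rw [hbm, ham]
        ring
      · push_neg at hc2
        rw [Tcard_zero m r k hr hk (Or.inr hc2)]
        have e1 : ((m : ℤ) - r + k) / 2 < 0 := by omega
        simp [ibinom, e1]
    · push_neg at hc1
      rw [Tcard_zero m r k hr hk (Or.inl hc1)]
      have e2 : ((k : ℤ) + r - m) / 2 < 0 := by omega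
      simp [ibinom, e2]
  · intro hkm
    rw [hcard, hkm]
    have hre : r % 2 = 0 := by omega
    obtain ⟨a, ha⟩ : ∃ a, 2 * a + r = 2 * m := ⟨m - r / 2, by omega⟩
    rw [Tcard_one m r a hr ha]
    have : m.choose a = m.choose (r / 2) := by
      rw [show a = m - r / 2 by omega, Nat.choose_symm (by omega)]
    rw [this]; ring
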